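/- arXiv:2110.10840 — 2 statements merged into one kernel-verified Lean document; each statement's English description precedes it below -/
import Mathlib

section
/- Let B = {x ∈ ℝⁿ : ‖x‖ = 1} be the unit sphere and T be inversion in the sphere of center α with ‖α‖ ≠ 1 and radius r > 0. Setting λ = ‖α‖² - 1, T(B \ {α}) is contained in the sphere of center (1 - r²/λ)·α and radius r²/|λ|. -/
/-- If `B` is the unit sphere and `T` is inversion in the sphere of center `α` with
`‖α‖ ≠ 1` and radius `r > 0`, then with `λ = ‖α‖² - 1`, `T(B \ {α})` is contained in
the sphere of center `(1 - r²/λ) • α` and radius `r²/|λ|`. -/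
theorem inversion_image_unit_sphere {n : ℕ}
    (α : EuclideanSpace ℝ (Fin n)) (r : ℝ) (hr : 0 < r) (hα : ‖α‖ ≠ 1)
    (T : EuclideanSpace ℝ (Fin n) → EuclideanSpace ℝ (Fin n))
    (hT : ∀ x, T x = α + (r ^ 2 / ‖x - α‖ ^ 2) • (x - α))
    (lam : ℝ) (hlam : lam = ‖α‖ ^ 2 - 1) :
    ∀ x : EuclideanSpace ℝ (Fin n), ‖x‖ = 1 → x ≠ α →
      T x ∈ Metric.sphere ((1 - r ^ 2 / lam) • α) (r ^ 2 / |lam|) := by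
  intro x hx hxa
  have hlam0 : lam ≠ 0 := by
    intro h
    apply hα
    have h1 : ‖α‖ ^ 2 = 1 := by rw [hlam] at h; linarith
    nlinarith [norm_nonneg α]
  have hsne : ‖x - α‖ ≠ 0 := by
    simpa [sub_eq_zero] using hxa
  have hs2 : (0 : ℝ) < ‖x - α‖ ^ 2 := by positivity
  rw [mem_sphere_iff_norm, hT]
  have hv : α + (r ^ 2 / ‖x - α‖ ^ 2) • (x - α) - (1 - r ^ 2 / lam) • α
      = (r ^ 2 / ‖x - α‖ ^ 2) • (x - α) + (r ^ 2 / lam) • α := by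
    rw [sub_smul, one_smul]; abel
  rw [hv]
  set s : ℝ := ‖x - α‖ ^ 2 with hsdef
  set t : ℝ := inner ℝ x α with htdef
  have hst : s = 1 - 2 * t + ‖α‖ ^ 2 := by
    rw [hsdef, norm_sub_sq_real, hx]; ring
  have key : ‖(r ^ 2 / s) • (x - α) + (r ^ 2 / lam) • α‖ ^ 2 = (r ^ 2 / |lam|) ^ 2 := by
    rw [norm_add_sq_real, norm_smul, norm_smul, real_inner_smul_left,
      real_inner_smul_right, inner_sub_left, ← htdef, real_inner_self_eq_norm_sq]
    rw [mul_pow, mul_pow, Real.norm_eq_abs, Real.norm_eq_abs, sq_abs, sq_abs,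
      div_pow, div_pow, div_pow, sq_abs, ← hsdef]
    have h1 : t = (1 - s + ‖α‖ ^ 2) / 2 := by linarith
    rw [hlam] at *
    rw [h1]
    field_simp
    ring
  have hrad : (0 : ℝ) ≤ r ^ 2 / |lam| := by positivity
  nlinarith [norm_nonneg ((r ^ 2 / s) • (x - α) + (r ^ 2 / lam) • α), key, hrad]
end

section
/- Let P(x) denote the projection of x ∈ 𝒮₋ onto the nearest face of 𝒮₋ (with ties broken by choosing the largest face index). Then the map x ↦ T_{P(x),√2}(x), sending each point to its inversion in the sphere of center P(x) and radius √2, is injective on the interior of 𝒮₋. -/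
open RealInnerProductSpace
variable {n : ℕ}
open RealInnerProductSpace


lemma corner_closed : IsClosed {x : EuclideanSpace ℝ (Fin n) | (∀ i, 0 ≤ x i) ∧ ∑ i, x i ≤ 1} := by
  have h : {x : EuclideanSpace ℝ (Fin n) | (∀ i, 0 ≤ x i) ∧ ∑ i, x i ≤ 1}
      = (⋂ i, {x : EuclideanSpace ℝ (Fin n) | 0 ≤ x i}) ∩ {x | ∑ i, x i ≤ 1} := by
    ext x; simp [Set.mem_iInter]
  rw [h]
  exact (isClosed_iInter fun i => isClosed_le continuous_const (PiLp.continuous_apply 2 _ i)).inter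
    (isClosed_le (continuous_finset_sum _ fun i _ => PiLp.continuous_apply 2 _ i) continuous_const)

lemma corner_open : IsOpen {x : EuclideanSpace ℝ (Fin n) | (∀ i, 0 < x i) ∧ ∑ i, x i < 1} := by
  have h : {x : EuclideanSpace ℝ (Fin n) | (∀ i, 0 < x i) ∧ ∑ i, x i < 1}
      = (⋂ i, {x : EuclideanSpace ℝ (Fin n) | 0 < x i}) ∩ {x | ∑ i, x i < 1} := by
    ext x; simp [Set.mem_iInter]
  rw [h]
  exact (isOpen_iInter_of_finite fun i => isOpen_lt continuous_const (PiLp.continuous_apply 2 _ i)).inter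
    (isOpen_lt (continuous_finset_sum _ fun i _ => PiLp.continuous_apply 2 _ i) continuous_const)

lemma corner_interior (S : Set (EuclideanSpace ℝ (Fin n)))
    (hS : S = {x | (∀ i, 0 ≤ x i) ∧ ∑ i, x i ≤ 1}) :
    interior S = {x | (∀ i, 0 < x i) ∧ ∑ i, x i < 1} := by
  apply subset_antisymm
  · intro x hx
    have hxS : x ∈ S := interior_subset hx
    rw [hS] at hxS
    rw [mem_interior_iff_mem_nhds, Metric.mem_nhds_iff] at hx
    obtain ⟨ε, hε, hball⟩ := hx
    constructor
    · intro i
      have hw : x - (ε/2) • EuclideanSpace.single i (1:ℝ) ∈ S := by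
        apply hball
        rw [Metric.mem_ball, dist_eq_norm]
        have : x - (ε/2) • EuclideanSpace.single i (1:ℝ) - x
            = -((ε/2) • EuclideanSpace.single i (1:ℝ)) := by abel
        rw [this, norm_neg, norm_smul, EuclideanSpace.norm_single]
        simp [abs_of_pos hε]
        linarith
      rw [hS] at hw
      have := hw.1 i
      simp [PiLp.sub_apply, PiLp.smul_apply, EuclideanSpace.single_apply] at this
      linarith
    · rcases Nat.eq_zero_or_pos n with hn | hn
      · subst hn; simp
      · set i0 : Fin n := ⟨0, hn⟩
        have hw : x + (ε/2) • EuclideanSpace.single i0 (1:ℝ) ∈ S := by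
          apply hball
          rw [Metric.mem_ball, dist_eq_norm]
          have : x + (ε/2) • EuclideanSpace.single i0 (1:ℝ) - x
              = (ε/2) • EuclideanSpace.single i0 (1:ℝ) := by abel
          rw [this, norm_smul, EuclideanSpace.norm_single]
          simp [abs_of_pos hε]
          linarith
        rw [hS] at hw
        have hsum := hw.2
        have : ∑ i, (x + (ε/2) • EuclideanSpace.single i0 (1:ℝ)) i
            = (∑ i, x i) + ε/2 := by
          simp only [PiLp.add_apply, PiLp.smul_apply, EuclideanSpace.single_apply,
            Finset.sum_add_distrib]
          simp [Finset.sum_ite_eq']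
        rw [this] at hsum
        linarith
  · apply interior_maximal _ corner_open
    rw [hS]
    intro x hx
    exact ⟨fun i => (hx.1 i).le, hx.2.le⟩

lemma corner_frontier (S : Set (EuclideanSpace ℝ (Fin n)))
    (hS : S = {x | (∀ i, 0 ≤ x i) ∧ ∑ i, x i ≤ 1})
    {α : EuclideanSpace ℝ (Fin n)} (hα : α ∈ frontier S) :
    (∀ i, 0 ≤ α i) ∧ ∑ i, α i ≤ 1 ∧ ((∃ j, α j = 0) ∨ ∑ i, α i = 1) := by
  have hcl : IsClosed S := hS ▸ corner_closed
  rw [hcl.frontier_eq] at hα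
  obtain ⟨hαS, hαni⟩ := hα
  rw [corner_interior S hS] at hαni
  rw [hS] at hαS
  obtain ⟨h1, h2⟩ := hαS
  refine ⟨h1, h2, ?_⟩
  by_cases hz : ∃ j, α j = 0
  · exact Or.inl hz
  · right
    push_neg at hz
    have : ∀ i, 0 < α i := fun i => lt_of_le_of_ne (h1 i) (Ne.symm (hz i))
    have : ¬ (∑ i, α i < 1) := fun hlt => hαni ⟨this, hlt⟩
    linarith

lemma nearest_pyth {E : Type*} [NormedAddCommGroup E] [InnerProductSpace ℝ E] {x α q : E}
    (hle : ‖x - α‖ ≤ ‖x - q‖) (horth : ⟪x - q, q - α⟫ = 0) : α = q := by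
  have hd : x - α = (x - q) + (q - α) := by abel
  have h : ‖x - α‖^2 = ‖x - q‖^2 + ‖q - α‖^2 := by
    rw [hd, norm_add_sq_real, horth]; ring
  have h0 : ‖q - α‖ = 0 := by
    nlinarith [norm_nonneg (x - α), norm_nonneg (x - q), norm_nonneg (q - α)]
  have := sub_eq_zero.mp (norm_eq_zero.mp h0)
  exact this.symm

/-- constant vector -/
def cvec (n : ℕ) (c : ℝ) : EuclideanSpace ℝ (Fin n) := WithLp.toLp 2 (fun _ => c)

@[simp] lemma cvec_apply (c : ℝ) (i : Fin n) : cvec n c i = c := rfl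

lemma sum_single_eq (j : Fin n) (c : ℝ) :
    ∑ i, (EuclideanSpace.single j c) i = c := by
  simp only [EuclideanSpace.single_apply]
  simp [Finset.sum_ite_eq]

lemma inner_single_real (j : Fin n) (v : EuclideanSpace ℝ (Fin n)) :
    ⟪EuclideanSpace.single j (1:ℝ), v⟫ = v j := by
  rw [EuclideanSpace.inner_single_left]; simp

lemma inner_const_real (c : ℝ) (v : EuclideanSpace ℝ (Fin n)) :
    ⟪cvec n c, v⟫ = c * ∑ i, v i := by
  rw [PiLp.inner_apply]
  simp [cvec, RCLike.inner_apply, Finset.mul_sum, mul_comm]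

lemma norm_cvec (c : ℝ) : ‖cvec n c‖ = Real.sqrt n * |c| := by
  rw [EuclideanSpace.norm_eq]
  simp only [cvec_apply, Real.norm_eq_abs, sq_abs]
  rw [Finset.sum_const, Finset.card_univ, Fintype.card_fin, nsmul_eq_mul]
  rw [Real.sqrt_mul (by positivity), Real.sqrt_sq_eq_abs]

lemma corner_witness (S : Set (EuclideanSpace ℝ (Fin n)))
    (hS : S = {x | (∀ i, 0 ≤ x i) ∧ ∑ i, x i ≤ 1})
    {x α : EuclideanSpace ℝ (Fin n)} (hx : x ∈ interior S)
    (hα : α ∈ frontier S) (hmin : ∀ y ∈ frontier S, ‖x - α‖ ≤ ‖x - y‖) :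
    ∃ ν : EuclideanSpace ℝ (Fin n), x - α = ‖x - α‖ • ν ∧ 0 < ‖x - α‖ ∧ ‖ν‖ = 1 ∧
      (∀ w ∈ S, 0 ≤ ⟪ν, w - α⟫) ∧
      ((∃ j, ν = EuclideanSpace.single j (1:ℝ)) ∨ (0 < n ∧ ν = cvec n (-(Real.sqrt n)⁻¹))) := by
  have hcl : IsClosed S := hS ▸ corner_closed
  have hint := corner_interior S hS
  have hxi : ∀ i, 0 < x i := by have := hint ▸ hx; exact this.1
  have hxs : ∑ i, x i < 1 := by have := hint ▸ hx; exact this.2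
  obtain ⟨hα1, hα2, hα3⟩ := corner_frontier S hS hα
  rcases hα3 with ⟨j, hαj⟩ | hsum
  · -- facet x_j = 0
    set q : EuclideanSpace ℝ (Fin n) := x - (x j) • EuclideanSpace.single j (1:ℝ) with hq
    have hqapp : ∀ i, q i = if i = j then 0 else x i := by
      intro i
      simp only [hq, PiLp.sub_apply, PiLp.smul_apply, EuclideanSpace.single_apply, smul_eq_mul]
      by_cases h : i = j
      · subst h; simp
      · simp [h]
    have hqsum : ∑ i, q i = (∑ i, x i) - x j := by
      simp only [hq, PiLp.sub_apply, PiLp.smul_apply, smul_eq_mul, Finset.sum_sub_distrib]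
      congr 1
      rw [← Finset.mul_sum, sum_single_eq, mul_one]
    have hqS : q ∈ S := by
      rw [hS]
      refine ⟨fun i => ?_, ?_⟩
      · rw [hqapp i]; by_cases h : i = j <;> simp [h, (hxi i).le]
      · rw [hqsum]; have := hxi j; linarith
    have hqF : q ∈ frontier S := by
      rw [hcl.frontier_eq]
      refine ⟨hqS, ?_⟩
      rw [hint]
      intro h
      have := h.1 j
      rw [hqapp j] at this; simp at this
    have hxq : x - q = (x j) • EuclideanSpace.single j (1:ℝ) := by
      rw [hq]; abel
    have hxqnorm : ‖x - q‖ = x j := by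
      rw [hxq, norm_smul, EuclideanSpace.norm_single, norm_one, mul_one,
        Real.norm_eq_abs, abs_of_pos (hxi j)]
    have horth : ⟪x - q, q - α⟫ = 0 := by
      rw [hxq, real_inner_smul_left, inner_single_real]
      have : (q - α) j = 0 := by
        rw [PiLp.sub_apply, hqapp j, hαj]; simp
      rw [this, mul_zero]
    have hαq : α = q := nearest_pyth (hmin q hqF) horth
    have hnorm : ‖x - α‖ = x j := by rw [hαq, hxqnorm]
    refine ⟨EuclideanSpace.single j (1:ℝ), ?_, ?_, ?_, ?_, Or.inl ⟨j, rfl⟩⟩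
    · rw [hnorm, hαq, hxq]
    · rw [hnorm]; exact hxi j
    · rw [EuclideanSpace.norm_single, norm_one]
    · intro w hw
      rw [inner_single_real, PiLp.sub_apply, hαq, hqapp j]
      simp only [if_true, sub_zero, eq_self_iff_true]
      rw [hS] at hw
      simpa using hw.1 j
  · -- facet sum = 1
    have hn : 0 < n := by
      by_contra h
      push_neg at h
      interval_cases n
      · simp at hsum
    have hsq : (0:ℝ) < Real.sqrt n := Real.sqrt_pos.mpr (by exact_mod_cast hn)
    set c : ℝ := (1 - ∑ i, x i) / n with hc
    have hcpos : 0 < c := by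
      apply div_pos (by linarith) (by exact_mod_cast hn)
    set q : EuclideanSpace ℝ (Fin n) := x + c • cvec n 1 with hq
    have hqapp : ∀ i, q i = x i + c := by
      intro i; simp [hq, PiLp.add_apply, PiLp.smul_apply]
    have hqsum : ∑ i, q i = 1 := by
      simp only [hqapp, Finset.sum_add_distrib, Finset.sum_const, Finset.card_univ,
        Fintype.card_fin, nsmul_eq_mul]
      rw [hc]
      field_simp
      ring
    have hqS : q ∈ S := by
      rw [hS]
      exact ⟨fun i => by rw [hqapp i]; have := hxi i; linarith, hqsum.le⟩
    have hqF : q ∈ frontier S := by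
      rw [hcl.frontier_eq]
      refine ⟨hqS, ?_⟩
      rw [hint]
      intro h
      exact absurd (hqsum ▸ h.2) (lt_irrefl 1)
    have hxq : x - q = (-c) • cvec n 1 := by
      rw [hq]
      ext i
      simp only [PiLp.sub_apply, PiLp.add_apply, PiLp.smul_apply, cvec_apply, smul_eq_mul]
      ring
    have hxqnorm : ‖x - q‖ = c * Real.sqrt n := by
      rw [hxq, norm_smul, norm_cvec, Real.norm_eq_abs, abs_neg, abs_of_pos hcpos]
      simp [mul_comm]
    have horth : ⟪x - q, q - α⟫ = 0 := by
      rw [hxq, real_inner_smul_left, inner_const_real]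
      have : ∑ i, (q - α) i = 0 := by
        simp only [PiLp.sub_apply, Finset.sum_sub_distrib, hqsum, hsum, sub_self]
      rw [this]; ring
    have hαq : α = q := nearest_pyth (hmin q hqF) horth
    have hnorm : ‖x - α‖ = c * Real.sqrt n := by rw [hαq, hxqnorm]
    refine ⟨cvec n (-(Real.sqrt n)⁻¹), ?_, ?_, ?_, ?_, Or.inr ⟨hn, rfl⟩⟩
    · rw [hnorm, hαq, hxq]
      ext i
      simp only [PiLp.smul_apply, cvec_apply, smul_eq_mul]
      field_simp
    · rw [hnorm]; positivity
    · rw [norm_cvec, abs_neg, abs_inv, abs_of_pos hsq]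
      field_simp
    · intro w hw
      rw [inner_const_real]
      have hws : ∑ i, (w - α) i = (∑ i, w i) - 1 := by
        simp only [PiLp.sub_apply, Finset.sum_sub_distrib, hsum]
      rw [hws]
      rw [hS] at hw
      have : (∑ i, w i) - 1 ≤ 0 := by linarith [hw.2]
      have hinv : (0:ℝ) < (Real.sqrt n)⁻¹ := by positivity
      nlinarith

lemma corner_diam {a b : EuclideanSpace ℝ (Fin n)}
    (ha1 : ∀ i, 0 ≤ a i) (ha2 : ∑ i, a i ≤ 1)
    (hb1 : ∀ i, 0 ≤ b i) (hb2 : ∑ i, b i ≤ 1) :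
    ‖a - b‖ ^ 2 ≤ 2 := by
  have hnorm : ‖a - b‖ ^ 2 = ∑ i, (a i - b i) ^ 2 := by
    rw [← real_inner_self_eq_norm_sq, PiLp.inner_apply]
    simp only [RCLike.inner_apply, conj_trivial, PiLp.sub_apply]
    exact Finset.sum_congr rfl fun i _ => by ring
  have key : ∀ (v : EuclideanSpace ℝ (Fin n)), (∀ i, 0 ≤ v i) → (∑ i, v i ≤ 1) →
      ∑ i, (v i) ^ 2 ≤ 1 := by
    intro v hv1 hv2
    have hs : 0 ≤ ∑ i, v i := Finset.sum_nonneg fun i _ => hv1 i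
    calc ∑ i, (v i) ^ 2 ≤ ∑ i, v i * ∑ j, v j := by
          apply Finset.sum_le_sum
          intro i _
          have hle : v i ≤ ∑ j, v j :=
            Finset.single_le_sum (fun j _ => hv1 j) (Finset.mem_univ i)
          nlinarith [hv1 i]
      _ = (∑ i, v i) ^ 2 := by rw [← Finset.sum_mul]; ring
      _ ≤ 1 := by nlinarith
  have hterm : ∀ i ∈ Finset.univ, (a i - b i) ^ 2 ≤ (a i) ^ 2 + (b i) ^ 2 := by
    intro i _
    nlinarith [mul_nonneg (ha1 i) (hb1 i)]
  have := Finset.sum_le_sum hterm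
  rw [Finset.sum_add_distrib] at this
  have h1 := key a ha1 ha2
  have h2 := key b hb1 hb2
  rw [hnorm]
  linarith


/-- Let `P x` be a nearest-point projection of `x` onto the boundary of the corner
simplex `𝒮₋` (a well-defined selection, e.g. with ties broken by face index). Then the
map `x ↦ T_{P(x),√2}(x)`, inverting each point in the sphere of center `P x` and radius
`√2`, is injective on the interior of `𝒮₋`. -/
theorem spins_map_injective_on_interior {n : ℕ}
    (S : Set (EuclideanSpace ℝ (Fin n)))
    (hS : S = {x | (∀ i, 0 ≤ x i) ∧ ∑ i, x i ≤ 1})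
    (P : EuclideanSpace ℝ (Fin n) → EuclideanSpace ℝ (Fin n))
    (hP : ∀ x ∈ interior S,
      P x ∈ frontier S ∧ ∀ y ∈ frontier S, ‖x - P x‖ ≤ ‖x - y‖)
    (T : EuclideanSpace ℝ (Fin n) → EuclideanSpace ℝ (Fin n) → EuclideanSpace ℝ (Fin n))
    (hT : ∀ α x, T α x = α + ((Real.sqrt 2) ^ 2 / ‖x - α‖ ^ 2) • (x - α)) :
    Set.InjOn (fun x => T (P x) x) (interior S) := by
  intro x hx y hy heq
  obtain ⟨hPx, hminx⟩ := hP x hx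
  obtain ⟨hPy, hminy⟩ := hP y hy
  obtain ⟨ν, hxν, hapos, hνnorm, hsuppν, hνcases⟩ := corner_witness S hS hx hPx hminx
  obtain ⟨μ, hyμ, hbpos, hμnorm, hsuppμ, hμcases⟩ := corner_witness S hS hy hPy hminy
  set a := ‖x - P x‖ with ha
  set b := ‖y - P y‖ with hb
  -- memberships
  have hxS : x ∈ S := interior_subset hx
  have hyS : y ∈ S := interior_subset hy
  obtain ⟨hPx1, hPx2, _⟩ := corner_frontier S hS hPx
  obtain ⟨hPy1, hPy2, _⟩ := corner_frontier S hS hPy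
  rw [hS] at hxS hyS
  -- the inversion equation
  have h2 : (Real.sqrt 2) ^ 2 = (2:ℝ) := Real.sq_sqrt (by norm_num)
  have hz : P x + (2/a) • ν = P y + (2/b) • μ := by
    have e1 : T (P x) x = T (P y) y := heq
    rw [hT, hT, h2, hxν, hyμ] at e1
    rw [norm_smul, Real.norm_eq_abs, abs_of_pos hapos, hνnorm, mul_one] at e1
    rw [norm_smul, Real.norm_eq_abs, abs_of_pos hbpos, hμnorm, mul_one] at e1
    rw [smul_smul, smul_smul] at e1
    have ea : 2 / a ^ 2 * a = 2 / a := by field_simp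
    have eb : 2 / b ^ 2 * b = 2 / b := by field_simp
    rw [ea, eb] at e1
    exact e1
  have hαβ : P x - P y = (2/b) • μ - (2/a) • ν := by
    have : P x - P y = (P y + (2/b) • μ) - ((2/a) • ν) - P y := by
      rw [← hz]; abel
    rw [this]; abel
  by_cases hνμ : ν = μ
  · -- same normal: a = b, P x = P y, x = y
    subst hνμ
    have h1 : 0 ≤ ⟪ν, P y - P x⟫ := hsuppν (P y) (by rw [hS]; exact ⟨hPy1, hPy2⟩)
    have h2' : 0 ≤ ⟪ν, P x - P y⟫ := hsuppμ (P x) (by rw [hS]; exact ⟨hPx1, hPx2⟩)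
    have h3 : ⟪ν, P x - P y⟫ = 2/b - 2/a := by
      rw [hαβ, inner_sub_right, real_inner_smul_right, real_inner_smul_right,
        real_inner_self_eq_norm_sq, hνnorm]
      ring
    have h4 : ⟪ν, P y - P x⟫ = -(2/b - 2/a) := by
      rw [← h3, ← inner_neg_right, neg_sub]
    have hab : 2/b - 2/a = 0 := by
      rw [h3] at h2'; rw [h4] at h1; linarith
    have haeqb : a = b := by
      have ha' : a ≠ 0 := ne_of_gt hapos
      have hb' : b ≠ 0 := ne_of_gt hbpos
      field_simp at hab
      linarith
    have hPP : P x - P y = 0 := by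
      rw [hαβ, haeqb, sub_self]
    have : x - y = (x - P x) - (y - P y) + (P x - P y) := by abel
    rw [hxν, hyμ, hPP, haeqb, sub_self, add_zero] at this
    exact sub_eq_zero.mp this
  · -- different normals: contradiction
    exfalso
    have hk : ⟪μ, ν⟫ ≤ 0 := by
      rcases hνcases with ⟨i, rfl⟩ | ⟨hn, rfl⟩ <;>
        rcases hμcases with ⟨j, rfl⟩ | ⟨hn', rfl⟩
      · have hij : j ≠ i := fun h => hνμ (by rw [h])
        rw [inner_single_real, EuclideanSpace.single_apply, if_neg hij]
      · rw [real_inner_comm, inner_single_real, cvec_apply]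
        have : (0:ℝ) ≤ (Real.sqrt n)⁻¹ := by positivity
        linarith
      · rw [inner_single_real, cvec_apply]
        have : (0:ℝ) ≤ (Real.sqrt n)⁻¹ := by positivity
        linarith
      · exact absurd rfl hνμ
    set k := ⟪μ, ν⟫ with hkdef
    have hd : ‖P x - P y‖ ^ 2 ≤ 2 := corner_diam hPx1 hPx2 hPy1 hPy2
    have ha2 : a ^ 2 ≤ 2 := corner_diam hxS.1 hxS.2 hPx1 hPx2
    have hb2 : b ^ 2 ≤ 2 := corner_diam hyS.1 hyS.2 hPy1 hPy2
    have hexp : ‖P x - P y‖ ^ 2 = (2/b)^2 - 2 * ((2/b) * ((2/a) * k)) + (2/a)^2 := by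
      rw [hαβ, norm_sub_sq_real, norm_smul, norm_smul, Real.norm_eq_abs, Real.norm_eq_abs,
        hνnorm, hμnorm, mul_one, mul_one, abs_of_pos (by positivity : (0:ℝ) < 2/b),
        abs_of_pos (by positivity : (0:ℝ) < 2/a), real_inner_smul_left, real_inner_smul_right]
    have c1 : (2:ℝ) ≤ (2/a)^2 := by
      rw [div_pow, le_div_iff₀ (by positivity)]
      nlinarith
    have c2 : (2:ℝ) ≤ (2/b)^2 := by
      rw [div_pow, le_div_iff₀ (by positivity)]
      nlinarith
    have c3 : 0 ≤ -(2 * ((2/b) * ((2/a) * k))) := by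
      have h1 : (0:ℝ) < 2/b := by positivity
      have h2 : (0:ℝ) < 2/a := by positivity
      have h5 : 0 ≤ (2:ℝ) * ((2/b) * ((2/a) * (-k))) :=
        mul_nonneg (by norm_num) (mul_nonneg h1.le (mul_nonneg h2.le (neg_nonneg.2 hk)))
      linarith [h5]
    rw [hexp] at hd
    linarith
end
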